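/- arXiv:2308.02666 — 4 statements merged into one kernel-verified Lean document; each statement's English description precedes it below -/
import Mathlib

section
/- Row 2 of the learned predicate π° is sound: let W be a path in G(m,n) whose last vertex is not a corner of the square s(i,j) (i < m, j < n), and suppose cnt(W, s(i,j)) = 1. Then every path W' having W as a prefix satisfies cnt(W', s(i,j)) ≤ 2. In particular, W is not a prefix of any path containing exactly 3 edges of S(i,j). -/
open SimpleGraph

/-- The grid graph on `(m+1) × (n+1)` vertices: two vertices are adjacent iff
the sum of the absolute differences of their coordinates (in `ℤ`) equals `1`. -/
def gridGraph (m n : ℕ) : SimpleGraph (Fin (m+1) × Fin (n+1)) where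
  Adj u v := |(u.1 : ℤ) - (v.1 : ℤ)| + |(u.2 : ℤ) - (v.2 : ℤ)| = 1
  symm := by
    constructor
    intro u v h
    rw [abs_sub_comm ((u.1 : ℤ)), abs_sub_comm ((u.2 : ℤ))] at h
    exact h
  loopless := by constructor; intro u h; simp at h

/-- The four corners of the square `s(i,j)`. -/
def squareCorners {m n : ℕ} (i : Fin m) (j : Fin n) :
    Finset (Fin (m+1) × Fin (n+1)) :=
  {(i.castSucc, j.castSucc), (i.succ, j.castSucc),
   (i.castSucc, j.succ), (i.succ, j.succ)}

/-- The four boundary edges of the square `s(i,j)`. -/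
def squareEdges {m n : ℕ} (i : Fin m) (j : Fin n) :
    Finset (Sym2 (Fin (m+1) × Fin (n+1))) :=
  { s((i.castSucc, j.castSucc), (i.succ, j.castSucc)),
    s((i.castSucc, j.succ), (i.succ, j.succ)),
    s((i.castSucc, j.castSucc), (i.castSucc, j.succ)),
    s((i.succ, j.castSucc), (i.succ, j.succ)) }

/-- The number of edges of the walk `W` lying on the boundary of square `s(i,j)`. -/
def cnt {m n : ℕ} {u v : Fin (m+1) × Fin (n+1)}
    (W : (gridGraph m n).Walk u v) (i : Fin m) (j : Fin n) : ℕ :=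
  (W.edges.filter (fun e => e ∈ squareEdges i j)).length

private lemma length_le_one_of_nodup {α} {l : List α} (hl : l.Nodup)
    (h : ∀ a ∈ l, ∀ b ∈ l, a = b) : l.length ≤ 1 := by
  match l with
  | [] => simp
  | [a] => simp
  | a :: b :: t =>
      exfalso
      have hab : a ≠ b := by simp [List.nodup_cons] at hl; tauto
      exact hab (h a (by simp) b (by simp))

/-- Row 2 of the learned predicate is sound: if a path `W` ends at a vertex that
is not a corner of the square `s(i,j)` and contains exactly one boundary edge of
that square, then every path extending `W` contains at most two boundary edges
of the square; in particular `W` is not a prefix of any path containing exactly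
three of them. -/
theorem row2_sound {m n : ℕ} {u v w : Fin (m+1) × Fin (n+1)}
    (i : Fin m) (j : Fin n)
    (W : (gridGraph m n).Walk u v) (hW : W.IsPath)
    (hv : v ∉ squareCorners i j) (hcnt : cnt W i j = 1)
    (W' : (gridGraph m n).Walk u w) (hW' : W'.IsPath)
    (hpre : ∃ X : (gridGraph m n).Walk v w, W' = W.append X) :
    cnt W' i j ≤ 2 ∧ cnt W' i j ≠ 3 := by
  obtain ⟨X, rfl⟩ := hpre
  set A : Fin (m+1) × Fin (n+1) := (i.castSucc, j.castSucc) with hA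
  set B : Fin (m+1) × Fin (n+1) := (i.succ, j.castSucc) with hB
  set C : Fin (m+1) × Fin (n+1) := (i.castSucc, j.succ) with hC
  set D : Fin (m+1) × Fin (n+1) := (i.succ, j.succ) with hD
  have hsum : cnt (W.append X) i j = cnt W i j + cnt X i j := by
    simp [cnt, Walk.edges_append, List.filter_append]
  -- disjointness of supports
  have hnodup := hW'.support_nodup
  rw [Walk.support_append, List.nodup_append] at hnodup
  have hdisj : ∀ x ∈ W.support, x ∉ X.support.tail := fun x hx hx' => hnodup.2.2 x hx x hx' rfl
  have hkey : ∀ x, x ∈ squareCorners i j → x ∈ X.support → x ∉ W.support := by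
    intro x hxc hxX hxW
    rcases (by rw [X.support_eq_cons] at hxX; exact List.mem_cons.mp hxX :
        x = v ∨ x ∈ X.support.tail) with h | h
    · exact hv (h ▸ hxc)
    · exact hdisj x hxW h
  -- corner memberships
  have hAc : A ∈ squareCorners i j := by simp [squareCorners, hA]
  have hBc : B ∈ squareCorners i j := by simp [squareCorners, hB]
  have hCc : C ∈ squareCorners i j := by simp [squareCorners, hC]
  have hDc : D ∈ squareCorners i j := by simp [squareCorners, hD]
  -- the unique square edge of W
  have hpos : 0 < (W.edges.filter (fun e => e ∈ squareEdges i j)).length := by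
    rw [show (W.edges.filter (fun e => e ∈ squareEdges i j)).length = cnt W i j from rfl, hcnt]
    norm_num
  obtain ⟨e0, he0⟩ := List.exists_mem_of_length_pos hpos
  rw [List.mem_filter] at he0
  obtain ⟨he0W, he0S⟩ := he0
  have he0S' : e0 = s(A, B) ∨ e0 = s(C, D) ∨ e0 = s(A, C) ∨ e0 = s(B, D) := by
    simpa [squareEdges, hA, hB, hC, hD] using he0S
  -- X edges nodup
  have hXnodup : X.edges.Nodup := by
    have := hW'.edges_nodup
    rw [Walk.edges_append, List.nodup_append] at this
    exact this.2.1
  have hcntX : cnt X i j ≤ 1 := by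
    apply length_le_one_of_nodup (hXnodup.filter _)
    intro e1 he1 e2 he2
    rw [List.mem_filter] at he1 he2
    -- helper: square edge in X cannot touch a vertex of W
    have main : ∀ e, e ∈ X.edges → e ∈ squareEdges i j →
        (e = s(A,B) ∨ e = s(C,D) ∨ e = s(A,C) ∨ e = s(B,D)) := by
      intro e heX heS
      simpa [squareEdges, hA, hB, hC, hD] using heS
    have notW : ∀ (x y : Fin (m+1) × Fin (n+1)), x ∈ squareCorners i j →
        s(x, y) ∈ X.edges → x ∉ W.support := by
      intro x y hxc hxy
      exact hkey x hxc (X.fst_mem_support_of_mem_edges hxy)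
    have notW2 : ∀ (x y : Fin (m+1) × Fin (n+1)), y ∈ squareCorners i j →
        s(x, y) ∈ X.edges → y ∉ W.support := by
      intro x y hyc hxy
      exact hkey y hyc (X.snd_mem_support_of_mem_edges hxy)
    -- endpoints of e0 are in W.support
    have resolve : ∀ e, e ∈ X.edges → e ∈ squareEdges i j → ∀ e', e' = e0 →
        (e' = s(A,B) ∨ e' = s(C,D) ∨ e' = s(A,C) ∨ e' = s(B,D)) → True := by
      intro _ _ _ _ _ _; trivial
    clear resolve
    have uniq : ∀ e, e ∈ X.edges → e ∈ squareEdges i j → ∀ f, f ∈ X.edges →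
        f ∈ squareEdges i j → e = f := by
      intro e heX heS f hfX hfS
      rcases he0S' with h0 | h0 | h0 | h0 <;>
      · rw [h0] at he0W
        have h1 := W.fst_mem_support_of_mem_edges he0W
        have h2 := W.snd_mem_support_of_mem_edges he0W
        rcases main e heX heS with he | he | he | he <;>
          rcases main f hfX hfS with hf | hf | hf | hf <;>
          subst he <;> subst hf <;>
          first
            | rfl
            | (exfalso; first
                | exact notW A B hAc heX h1
                | exact notW2 A B hBc heX h1
                | exact notW A B hAc heX h2
                | exact notW2 A B hBc heX h2
                | exact notW A B hAc hfX h1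
                | exact notW2 A B hBc hfX h1
                | exact notW A B hAc hfX h2
                | exact notW2 A B hBc hfX h2
                | exact notW C D hCc heX h1
                | exact notW2 C D hDc heX h1
                | exact notW C D hCc heX h2
                | exact notW2 C D hDc heX h2
                | exact notW C D hCc hfX h1
                | exact notW2 C D hDc hfX h1
                | exact notW C D hCc hfX h2
                | exact notW2 C D hDc hfX h2
                | exact notW A C hAc heX h1
                | exact notW2 A C hCc heX h1
                | exact notW A C hAc heX h2
                | exact notW2 A C hCc heX h2
                | exact notW A C hAc hfX h1
                | exact notW2 A C hCc hfX h1
                | exact notW A C hAc hfX h2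
                | exact notW2 A C hCc hfX h2
                | exact notW B D hBc heX h1
                | exact notW2 B D hDc heX h1
                | exact notW B D hBc heX h2
                | exact notW2 B D hDc heX h2
                | exact notW B D hBc hfX h1
                | exact notW2 B D hDc hfX h1
                | exact notW B D hBc hfX h2
                | exact notW2 B D hDc hfX h2)
    exact uniq e1 he1.1 (by simpa using he1.2) e2 he2.1 (by simpa using he2.2)
  constructor
  · omega
  · omega
end

section
/- Row 3 of the learned predicate π° is sound: let W be a path in G(m,n) whose last vertex is not a corner of the square s(i,j) (i < m, j < n), and suppose cnt(W, s(i,j)) = 2. Then every path W' having W as a prefix satisfies cnt(W', s(i,j)) = 2; that is, no extension of W to a longer path can include any further edge of S(i,j). -/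
open SimpleGraph

/-- Helper: among four prescribed square edges, if an edge of a walk avoids the
vertices `a` and `b`, it must be the edge `s(c,d)`. -/
lemma opp_edge {V : Type*} {G : SimpleGraph V} {u v : V} (W : G.Walk u v)
    {a b c d : V} {e : Sym2 V}
    (he : e ∈ W.edges)
    (hmem : e = s(a,b) ∨ e = s(c,d) ∨ e = s(a,c) ∨ e = s(b,d))
    (hA : a ∉ W.support) (hB : b ∉ W.support) : e = s(c,d) := by
  rcases hmem with rfl | rfl | rfl | rfl
  · exact absurd (W.fst_mem_support_of_mem_edges he) hA
  · rfl
  · exact absurd (W.fst_mem_support_of_mem_edges he) hA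
  · exact absurd (W.fst_mem_support_of_mem_edges he) hB

/-- Row 3 of the learned predicate is sound: if a path `W` ends at a vertex that
is not a corner of the square `s(i,j)` and contains exactly two boundary edges of
that square, then every path extending `W` contains exactly two boundary edges
of the square. -/
theorem row3_sound {m n : ℕ} {u v w : Fin (m+1) × Fin (n+1)}
    (i : Fin m) (j : Fin n)
    (W : (gridGraph m n).Walk u v) (hW : W.IsPath)
    (hv : v ∉ squareCorners i j) (hcnt : cnt W i j = 2)
    (W' : (gridGraph m n).Walk u w) (hW' : W'.IsPath)
    (hpre : ∃ X : (gridGraph m n).Walk v w, W' = W.append X) :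
    cnt W' i j = 2 := by
  obtain ⟨X, rfl⟩ := hpre
  set a : Fin (m+1) × Fin (n+1) := (i.castSucc, j.castSucc) with ha
  set b : Fin (m+1) × Fin (n+1) := (i.succ, j.castSucc) with hb
  set c : Fin (m+1) × Fin (n+1) := (i.castSucc, j.succ) with hc
  set d : Fin (m+1) × Fin (n+1) := (i.succ, j.succ) with hd
  have hadd : cnt (W.append X) i j = cnt W i j + cnt X i j := by
    simp [cnt, Walk.edges_append, List.filter_append]
  rw [hadd, hcnt]
  suffices h0 : cnt X i j = 0 by omega
  rw [cnt, List.length_eq_zero_iff, List.filter_eq_nil_iff]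
  rintro e heX hee
  simp only [decide_eq_true_eq] at hee
  exfalso
  -- unfold membership in squareEdges
  have memE : ∀ e' : Sym2 (Fin (m+1) × Fin (n+1)), e' ∈ squareEdges i j →
      e' = s(a,b) ∨ e' = s(c,d) ∨ e' = s(a,c) ∨ e' = s(b,d) := by
    intro e' h
    simpa [squareEdges, Finset.mem_insert, Finset.mem_singleton, ← ha, ← hb, ← hc, ← hd]
      using h
  -- every corner appearing in `X.support` is not in `W.support`
  have hdisj : ∀ x, x ∈ X.support → x ∈ squareCorners i j → x ∉ W.support := by
    intro x hxX hxc hxW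
    have hx_ne : x ≠ v := fun h => hv (h ▸ hxc)
    have hx_tail : x ∈ X.support.tail := by
      have := X.support_eq_cons
      rw [this] at hxX
      rcases List.mem_cons.mp hxX with h | h
      · exact absurd h hx_ne
      · exact h
    have hnd : (W.append X).support.Nodup := hW'.support_nodup
    rw [Walk.support_append, List.nodup_append] at hnd
    exact hnd.2.2 x hxW x hx_tail rfl
  have hcormem : ∀ x : Fin (m+1) × Fin (n+1),
      (x = a ∨ x = b ∨ x = c ∨ x = d) → x ∈ squareCorners i j := by
    intro x hx
    simp only [squareCorners, Finset.mem_insert, Finset.mem_singleton, ← ha, ← hb, ← hc, ← hd]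
    tauto
  -- extract the two distinct square edges of W
  rw [cnt] at hcnt
  obtain ⟨e1, e2, h12⟩ := List.length_eq_two.mp hcnt
  have hnd : (W.edges.filter (fun e => e ∈ squareEdges i j)).Nodup :=
    (hW.edges_nodup).filter _
  rw [h12] at hnd
  have hne12 : e1 ≠ e2 := by simpa using hnd
  have he1 : e1 ∈ W.edges ∧ e1 ∈ squareEdges i j := by
    have : e1 ∈ W.edges.filter (fun e => e ∈ squareEdges i j) := by simp [h12]
    simpa using List.mem_filter.mp this
  have he2 : e2 ∈ W.edges ∧ e2 ∈ squareEdges i j := by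
    have : e2 ∈ W.edges.filter (fun e => e ∈ squareEdges i j) := by simp [h12]
    simpa using List.mem_filter.mp this
  -- case on which edge e is
  rcases memE e hee with rfl | rfl | rfl | rfl
  · -- e = s(a,b); a, b ∉ W.support
    have hA : a ∉ W.support :=
      hdisj a (X.fst_mem_support_of_mem_edges heX) (hcormem a (Or.inl rfl))
    have hB : b ∉ W.support :=
      hdisj b (X.snd_mem_support_of_mem_edges heX) (hcormem b (Or.inr (Or.inl rfl)))
    have k1 := opp_edge W he1.1 (memE e1 he1.2) hA hB
    have k2 := opp_edge W he2.1 (memE e2 he2.2) hA hB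
    exact hne12 (k1.trans k2.symm)
  · -- e = s(c,d); c, d ∉ W.support
    have hC : c ∉ W.support :=
      hdisj c (X.fst_mem_support_of_mem_edges heX) (hcormem c (Or.inr (Or.inr (Or.inl rfl))))
    have hD : d ∉ W.support :=
      hdisj d (X.snd_mem_support_of_mem_edges heX) (hcormem d (Or.inr (Or.inr (Or.inr rfl))))
    have reorder : ∀ e' : Sym2 (Fin (m+1) × Fin (n+1)), e' ∈ squareEdges i j →
        e' = s(c,d) ∨ e' = s(a,b) ∨ e' = s(c,a) ∨ e' = s(d,b) := by
      intro e' h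
      rcases memE e' h with rfl | rfl | rfl | rfl
      · exact Or.inr (Or.inl rfl)
      · exact Or.inl rfl
      · exact Or.inr (Or.inr (Or.inl (Sym2.eq_swap)))
      · exact Or.inr (Or.inr (Or.inr (Sym2.eq_swap)))
    have k1 := opp_edge W he1.1 (reorder e1 he1.2) hC hD
    have k2 := opp_edge W he2.1 (reorder e2 he2.2) hC hD
    exact hne12 (k1.trans k2.symm)
  · -- e = s(a,c); a, c ∉ W.support
    have hA : a ∉ W.support :=
      hdisj a (X.fst_mem_support_of_mem_edges heX) (hcormem a (Or.inl rfl))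
    have hC : c ∉ W.support :=
      hdisj c (X.snd_mem_support_of_mem_edges heX) (hcormem c (Or.inr (Or.inr (Or.inl rfl))))
    have reorder : ∀ e' : Sym2 (Fin (m+1) × Fin (n+1)), e' ∈ squareEdges i j →
        e' = s(a,c) ∨ e' = s(b,d) ∨ e' = s(a,b) ∨ e' = s(c,d) := by
      intro e' h
      rcases memE e' h with rfl | rfl | rfl | rfl
      · exact Or.inr (Or.inr (Or.inl rfl))
      · exact Or.inr (Or.inr (Or.inr rfl))
      · exact Or.inl rfl
      · exact Or.inr (Or.inl rfl)
    have k1 := opp_edge W he1.1 (reorder e1 he1.2) hA hC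
    have k2 := opp_edge W he2.1 (reorder e2 he2.2) hA hC
    exact hne12 (k1.trans k2.symm)
  · -- e = s(b,d); b, d ∉ W.support
    have hB : b ∉ W.support :=
      hdisj b (X.fst_mem_support_of_mem_edges heX) (hcormem b (Or.inr (Or.inl rfl)))
    have hD : d ∉ W.support :=
      hdisj d (X.snd_mem_support_of_mem_edges heX) (hcormem d (Or.inr (Or.inr (Or.inr rfl))))
    have reorder : ∀ e' : Sym2 (Fin (m+1) × Fin (n+1)), e' ∈ squareEdges i j →
        e' = s(b,d) ∨ e' = s(a,c) ∨ e' = s(b,a) ∨ e' = s(d,c) := by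
      intro e' h
      rcases memE e' h with rfl | rfl | rfl | rfl
      · exact Or.inr (Or.inr (Or.inl (Sym2.eq_swap)))
      · exact Or.inr (Or.inr (Or.inr (Sym2.eq_swap)))
      · exact Or.inr (Or.inl rfl)
      · exact Or.inl rfl
    have k1 := opp_edge W he1.1 (reorder e1 he1.2) hB hD
    have k2 := opp_edge W he2.1 (reorder e2 he2.2) hB hD
    exact hne12 (k1.trans k2.symm)
end

section
/- Row 3 of π° has no false positives on solutions: let a Witness triangle puzzle instance on the m×n grid assign k(s) = 3 triangles to a square s. If L is a solution of the instance and W is a prefix of L whose last vertex is not a corner of s, then cnt(W,s) ≠ 2. -/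
open SimpleGraph

lemma key_corner {m n : ℕ} (i : Fin m) (j : Fin n)
    {e1 e2 e3 : Sym2 (Fin (m+1) × Fin (n+1))}
    (h1 : e1 ∈ squareEdges i j) (h2 : e2 ∈ squareEdges i j) (h3 : e3 ∈ squareEdges i j)
    (ne12 : e1 ≠ e2) (ne13 : e3 ≠ e1) (ne23 : e3 ≠ e2) :
    ∃ c ∈ squareCorners i j, c ∈ e3 ∧ (c ∈ e1 ∨ c ∈ e2) := by
  have hi : i.castSucc ≠ i.succ := (Fin.castSucc_lt_succ (i := i)).ne
  have hj : j.castSucc ≠ j.succ := (Fin.castSucc_lt_succ (i := j)).ne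
  simp only [squareEdges, Finset.mem_insert, Finset.mem_singleton] at h1 h2 h3
  rcases h1 with rfl|rfl|rfl|rfl <;> rcases h2 with rfl|rfl|rfl|rfl <;>
    rcases h3 with rfl|rfl|rfl|rfl <;>
  first
    | exact (ne12 rfl).elim
    | exact (ne13 rfl).elim
    | exact (ne23 rfl).elim
    | (refine ⟨(i.castSucc, j.castSucc), by simp [squareCorners], ?_, ?_⟩ <;>
        (simp [Sym2.mem_iff, hi, hj]; done))
    | (refine ⟨(i.succ, j.castSucc), by simp [squareCorners], ?_, ?_⟩ <;>
        (simp [Sym2.mem_iff, hi, hj]; done))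
    | (refine ⟨(i.castSucc, j.succ), by simp [squareCorners], ?_, ?_⟩ <;>
        (simp [Sym2.mem_iff, hi, hj]; done))
    | (refine ⟨(i.succ, j.succ), by simp [squareCorners], ?_, ?_⟩ <;>
        (simp [Sym2.mem_iff, hi, hj]; done))

lemma mem_support_of_mem_edge {V : Type*} {G : SimpleGraph V} {u v c : V}
    {e : Sym2 V} (p : G.Walk u v) (he : e ∈ p.edges) (hc : c ∈ e) :
    c ∈ p.support := by
  induction e using Sym2.ind with
  | _ a b =>
    rcases Sym2.mem_iff.mp hc with rfl | rfl
    · exact p.fst_mem_support_of_mem_edges he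
    · exact p.snd_mem_support_of_mem_edges he

/-- Row 3 of the learned predicate has no false positives on solutions: if a
square carries a three-triangle constraint, `L` solves the puzzle, and `W` is a
prefix of `L` ending at a vertex which is not a corner of that square, then `W`
does not contain exactly two boundary edges of the square. -/
theorem row3_no_false_positives {m n : ℕ}
    {vStart vGoal v : Fin (m+1) × Fin (n+1)}
    (k : Fin m → Fin n → Option ℕ)
    (hk : ∀ i j t, k i j = some t → t = 1 ∨ t = 2 ∨ t = 3)
    (L : (gridGraph m n).Walk vStart vGoal) (hL : L.IsPath)
    (hsol : ∀ i j t, k i j = some t → cnt L i j = t)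
    (i : Fin m) (j : Fin n) (h3 : k i j = some 3)
    (W : (gridGraph m n).Walk vStart v)
    (hpre : ∃ X : (gridGraph m n).Walk v vGoal, L = W.append X)
    (hv : v ∉ squareCorners i j) :
    cnt W i j ≠ 2 := by
  intro hW2
  obtain ⟨X, rfl⟩ := hpre
  have hcnt : cnt (W.append X) i j = cnt W i j + cnt X i j := by
    simp [cnt, Walk.edges_append, List.filter_append]
  have hL3 : cnt (W.append X) i j = 3 := hsol i j 3 h3
  have hX1 : cnt X i j = 1 := by omega
  -- extract the two edges of W
  have hWnodup : W.edges.Nodup := (hL.of_append_left).isTrail.edges_nodup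
  have hfWnodup : (W.edges.filter (fun e => e ∈ squareEdges i j)).Nodup :=
    hWnodup.filter _
  obtain ⟨e1, e2, hW12⟩ := List.length_eq_two.mp hW2
  obtain ⟨e3, hX3⟩ := List.length_eq_one_iff.mp hX1
  have he1 : e1 ∈ W.edges ∧ e1 ∈ squareEdges i j := by
    have h : e1 ∈ W.edges.filter (fun e => e ∈ squareEdges i j) := by simp [hW12]
    have := List.mem_filter.mp h
    simpa using this
  have he2 : e2 ∈ W.edges ∧ e2 ∈ squareEdges i j := by
    have h : e2 ∈ W.edges.filter (fun e => e ∈ squareEdges i j) := by simp [hW12]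
    have := List.mem_filter.mp h
    simpa using this
  have he3 : e3 ∈ X.edges ∧ e3 ∈ squareEdges i j := by
    have h : e3 ∈ X.edges.filter (fun e => e ∈ squareEdges i j) := by simp [hX3]
    have := List.mem_filter.mp h
    simpa using this
  have ne12 : e1 ≠ e2 := by
    rw [hW12] at hfWnodup
    intro h
    exact (List.nodup_cons.mp hfWnodup).1 (by simp [h])
  have hdisj : ∀ e, e ∈ W.edges → e ∈ X.edges → False := by
    have hnd : ((W.append X).edges).Nodup := hL.isTrail.edges_nodup
    rw [Walk.edges_append] at hnd
    exact fun e hw hx => (List.disjoint_of_nodup_append hnd) hw hx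
  have ne13 : e3 ≠ e1 := fun h => hdisj e1 he1.1 (h ▸ he3.1)
  have ne23 : e3 ≠ e2 := fun h => hdisj e2 he2.1 (h ▸ he3.1)
  obtain ⟨c, hcC, hce3, hce12⟩ := key_corner i j he1.2 he2.2 he3.2 ne12 ne13 ne23
  have hcW : c ∈ W.support := by
    rcases hce12 with h | h
    · exact mem_support_of_mem_edge W he1.1 h
    · exact mem_support_of_mem_edge W he2.1 h
  have hcX : c ∈ X.support := mem_support_of_mem_edge X he3.1 hce3
  have hcne : c ≠ v := fun h => hv (h ▸ hcC)
  have hcXtail : c ∈ X.support.tail := by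
    rw [X.support_eq_cons] at hcX
    rcases List.mem_cons.mp hcX with h | h
    · exact (hcne h).elim
    · exact h
  have hnd : ((W.append X).support).Nodup := hL.support_nodup
  rw [Walk.support_append] at hnd
  exact (List.disjoint_of_nodup_append hnd) hcW hcXtail
end

section
/- Theorem 1 (the learned predicate π° has no false positives): let L be a solution of a Witness triangle puzzle instance on the m×n grid and let W be any prefix of L. Then (a) for every constrained square s, cnt(W,s) ≤ k(s); and (b) for every constrained square s with k(s) = 3 such that the last vertex of W is not a corner of s, cnt(W,s) ∉ {1, 2}. Consequently π°, which returns True on a partial path exactly when (a) or (b) is violated for some constrained square, never returns True on a prefix of a solution. -/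
open SimpleGraph

lemma triple_share {V : Type*} [DecidableEq V] (a b c d : V)
    {e f g : Sym2 V}
    (he : e ∈ ({s(a,b), s(c,d), s(a,c), s(b,d)} : Finset (Sym2 V)))
    (hf : f ∈ ({s(a,b), s(c,d), s(a,c), s(b,d)} : Finset (Sym2 V)))
    (hg : g ∈ ({s(a,b), s(c,d), s(a,c), s(b,d)} : Finset (Sym2 V)))
    (hef : e ≠ f) (heg : e ≠ g) (hfg : f ≠ g) :
    (∃ u, u ∈ e ∧ u ∈ f) ∨ ((∃ u, u ∈ e ∧ u ∈ g) ∧ (∃ u, u ∈ g ∧ u ∈ f)) := by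
  simp only [Finset.mem_insert, Finset.mem_singleton] at he hf hg
  rcases he with rfl|rfl|rfl|rfl <;> rcases hf with rfl|rfl|rfl|rfl <;>
    rcases hg with rfl|rfl|rfl|rfl <;> simp_all [Sym2.mem_iff]

lemma corner_of_mem_edge {m n : ℕ} {i : Fin m} {j : Fin n}
    {u : Fin (m+1) × Fin (n+1)} {e : Sym2 (Fin (m+1) × Fin (n+1))}
    (he : e ∈ squareEdges i j) (hu : u ∈ e) : u ∈ squareCorners i j := by
  simp only [squareEdges, Finset.mem_insert, Finset.mem_singleton] at he
  rcases he with rfl|rfl|rfl|rfl <;>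
    rcases Sym2.mem_iff.mp hu with rfl|rfl <;>
    simp [squareCorners]

lemma mem_support_of_mem_edges'' {m n : ℕ} {u v x : Fin (m+1) × Fin (n+1)}
    (p : (gridGraph m n).Walk u v) {e : Sym2 (Fin (m+1) × Fin (n+1))}
    (he : e ∈ p.edges) (hx : x ∈ e) : x ∈ p.support := by
  induction e using Sym2.ind with
  | _ a b =>
    rcases Sym2.mem_iff.mp hx with rfl|rfl
    · exact p.fst_mem_support_of_mem_edges he
    · exact p.snd_mem_support_of_mem_edges he


/-- Theorem 1: the learned predicate has no false positives. For any prefix `W`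
of a solution `L`: (a) for every constrained square, the edge count of `W` is at
most the triangle count; (b) for every square with a three-triangle constraint
whose corners do not include the last vertex of `W`, the edge count of `W` is
neither 1 nor 2. Hence the predicate, which fires exactly when (a) or (b) is
violated, never fires on a prefix of a solution. -/
theorem learned_predicate_no_false_positives {m n : ℕ}
    {vStart vGoal v : Fin (m+1) × Fin (n+1)}
    (k : Fin m → Fin n → Option ℕ)
    (hk : ∀ i j t, k i j = some t → t = 1 ∨ t = 2 ∨ t = 3)
    (L : (gridGraph m n).Walk vStart vGoal) (hL : L.IsPath)
    (hsol : ∀ i j t, k i j = some t → cnt L i j = t)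
    (W : (gridGraph m n).Walk vStart v)
    (hpre : ∃ X : (gridGraph m n).Walk v vGoal, L = W.append X) :
    (∀ i j t, k i j = some t → cnt W i j ≤ t) ∧
    (∀ i j, k i j = some 3 → v ∉ squareCorners i j →
      cnt W i j ∉ ({1, 2} : Set ℕ)) := by
  obtain ⟨X, rfl⟩ := hpre
  have hcnt : ∀ (i : Fin m) (j : Fin n),
      cnt (W.append X) i j = cnt W i j + cnt X i j := by
    intro i j
    simp [cnt, Walk.edges_append, List.filter_append]
  constructor
  · intro i j t hkt
    have h := hsol i j t hkt
    rw [hcnt] at h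
    omega
  · intro i j hk3 hv hmem
    simp only [Set.mem_insert_iff, Set.mem_singleton_iff] at hmem
    have h3 : cnt W i j + cnt X i j = 3 := by
      rw [← hcnt]; exact hsol i j 3 hk3
    -- nonempty on both sides
    have hWpos : 0 < (W.edges.filter (fun e => e ∈ squareEdges i j)).length := by
      rcases hmem with h|h <;> simp only [cnt] at h ⊢ <;> omega
    have hXpos : 0 < (X.edges.filter (fun e => e ∈ squareEdges i j)).length := by
      have : cnt X i j ≠ 0 := by rcases hmem with h|h <;> omega
      simpa [cnt, List.length_pos_iff] using this
    obtain ⟨e, hefil⟩ := List.exists_mem_of_length_pos hWpos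
    obtain ⟨f, hffil⟩ := List.exists_mem_of_length_pos hXpos
    rw [List.mem_filter] at hefil hffil
    obtain ⟨heW, heS⟩ := hefil
    obtain ⟨hfX, hfS⟩ := hffil
    simp only [decide_eq_true_eq] at heS hfS
    -- edges of L are nodup
    have hnodup : (W.edges ++ X.edges).Nodup := by
      have := hL.edges_nodup
      rwa [Walk.edges_append] at this
    have hdisj := (List.nodup_append'.mp hnodup).2.2
    have hef : e ≠ f := fun h => hdisj heW (h ▸ hfX)
    -- third edge
    set F : Finset (Sym2 (Fin (m+1) × Fin (n+1))) :=
      ((W.edges ++ X.edges).filter (fun e => e ∈ squareEdges i j)).toFinset with hF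
    have hFcard : F.card = 3 := by
      rw [hF, List.toFinset_card_of_nodup (hnodup.filter _)]
      have : cnt (W.append X) i j = 3 := hsol i j 3 hk3
      simpa [cnt, Walk.edges_append] using this
    have heF : e ∈ F := by
      rw [hF, List.mem_toFinset, List.mem_filter]
      exact ⟨List.mem_append_left _ heW, by simpa using heS⟩
    have hfF : f ∈ F := by
      rw [hF, List.mem_toFinset, List.mem_filter]
      exact ⟨List.mem_append_right _ hfX, by simpa using hfS⟩
    have hnsub : ¬ F ⊆ ({e, f} : Finset _) := by
      intro hsub
      have := Finset.card_le_card hsub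
      have h2 : ({e, f} : Finset (Sym2 (Fin (m+1) × Fin (n+1)))).card ≤ 2 :=
        Finset.card_insert_le _ _ |>.trans (by simp)
      omega
    obtain ⟨g, hgF, hgef⟩ := Finset.not_subset.mp hnsub
    simp only [Finset.mem_insert, Finset.mem_singleton, not_or] at hgef
    obtain ⟨hge, hgf⟩ := hgef
    have hgmem : g ∈ W.edges ++ X.edges ∧ g ∈ squareEdges i j := by
      rw [hF, List.mem_toFinset, List.mem_filter] at hgF
      exact ⟨hgF.1, by simpa using hgF.2⟩
    -- key: shared vertex of W and X must be v
    have hkey : ∀ u, u ∈ W.support → u ∈ X.support → u = v := by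
      intro u hu hx
      by_contra hne
      have hnd := hL.support_nodup
      rw [Walk.support_append] at hnd
      have hd := (List.nodup_append'.mp hnd).2.2
      have : u ∈ X.support.tail := by
        have hx' : u ∈ v :: X.support.tail := X.support_eq_cons ▸ hx
        rcases List.mem_cons.mp hx' with h|h
        · exact absurd h hne
        · exact h
      exact hd hu this
    -- derive contradiction from a shared corner between a W-edge and an X-edge
    have final : ∀ (e' f' : Sym2 (Fin (m+1) × Fin (n+1))),
        e' ∈ W.edges → f' ∈ X.edges → e' ∈ squareEdges i j →
        (∃ u, u ∈ e' ∧ u ∈ f') → False := by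
      rintro e' f' he' hf' heS' ⟨u, hue, huf⟩
      have h1 := mem_support_of_mem_edges'' W he' hue
      have h2 := mem_support_of_mem_edges'' X hf' huf
      have := hkey u h1 h2
      exact hv (this ▸ corner_of_mem_edge heS' hue)
    have htr := triple_share (i.castSucc, j.castSucc) (i.succ, j.castSucc)
      (i.castSucc, j.succ) (i.succ, j.succ)
      (e := e) (f := f) (g := g) (by simpa [squareEdges] using heS)
      (by simpa [squareEdges] using hfS) (by simpa [squareEdges] using hgmem.2)
      hef (fun h => hge h.symm) (fun h => hgf h.symm)
    rcases htr with ⟨u, hue, huf⟩ | ⟨⟨u1, h1e, h1g⟩, ⟨u2, h2g, h2f⟩⟩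
    · exact final e f heW hfX heS ⟨u, hue, huf⟩
    · rcases List.mem_append.mp hgmem.1 with hgW | hgX
      · exact final g f hgW hfX hgmem.2 ⟨u2, h2g, h2f⟩
      · exact final e g heW hgX heS ⟨u1, h1e, h1g⟩
end
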